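/- WE rate for IID process with additive weight: if X₀, X₁, … are IID with probability mass function p on a finite set and φ_n(x₀,…,x_{n−1}) = Σ_{j=0}^{n−1} ψ(x_j), then the weighted entropy h^w_{φ_n}(p_n) = −E[φ_n(X₀^{n−1}) log p_n(X₀^{n−1})] equals n(n−1)·S(p)·E[ψ(X)] + n·H^w_ψ(p), where S(p) = −E[log p(X)] and H^w_ψ(p) = −E[ψ(X) log p(X)]. -/

import Mathlib

open Real

private lemma sum_prod_pi {A : Type*} [Fintype A] (n : ℕ) (f : Fin n → A → ℝ) :
    ∑ x : Fin n → A, ∏ i, f i (x i) = ∏ i, ∑ a, f i a := by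
  classical
  rw [Finset.prod_univ_sum]
  simp [Fintype.piFinset_univ]

private lemma pair_sum {A : Type*} [Fintype A] (p ψ : A → ℝ)
    (hp_prob : ∑ a, p a = 1) {n : ℕ} (j k : Fin n) :
    ∑ x : Fin n → A, ψ (x j) * Real.log (p (x k)) * ∏ i, p (x i)
      = if j = k then ∑ a, ψ a * p a * Real.log (p a)
        else (∑ a, ψ a * p a) * (∑ a, p a * Real.log (p a)) := by
  classical
  set f : Fin n → A → ℝ := fun i a =>
    (if i = j then ψ a else 1) * (if i = k then Real.log (p a) else 1) * p a with hf
  have h1 : ∀ x : Fin n → A,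
      ψ (x j) * Real.log (p (x k)) * ∏ i, p (x i) = ∏ i, f i (x i) := by
    intro x
    simp only [hf, Finset.prod_mul_distrib, Finset.prod_ite_eq', Finset.mem_univ, if_true]
  simp only [h1]
  rw [sum_prod_pi]
  by_cases hjk : j = k
  · subst hjk
    rw [if_pos rfl]
    have h2 : ∀ i : Fin n, (∑ a, f i a)
        = if i = j then ∑ a, ψ a * p a * Real.log (p a) else 1 := by
      intro i
      by_cases hij : i = j
      · subst hij
        simp only [hf, if_pos rfl, if_true]
        apply Finset.sum_congr rfl
        intro a _; ring
      · simp only [hf, if_neg hij, one_mul, hp_prob]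
    simp only [h2]
    rw [Finset.prod_ite_eq', if_pos (Finset.mem_univ j)]
  · rw [if_neg hjk]
    have h2 : ∀ i : Fin n, (∑ a, f i a)
        = (if i = j then ∑ a, ψ a * p a else 1) *
          (if i = k then ∑ a, p a * Real.log (p a) else 1) := by
      intro i
      by_cases hij : i = j
      · subst hij
        rw [if_pos rfl, if_neg hjk, mul_one]
        simp only [hf, if_pos rfl, if_neg hjk, mul_one, if_true]
      · rw [if_neg hij, one_mul]
        by_cases hik : i = k
        · subst hik
          rw [if_pos rfl]
          simp only [hf, if_neg hij, if_pos rfl, one_mul, if_true]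
          apply Finset.sum_congr rfl
          intro a _; ring
        · rw [if_neg hik]
          simp only [hf, if_neg hij, if_neg hik, one_mul, hp_prob]
    simp only [h2]
    rw [Finset.prod_mul_distrib, Finset.prod_ite_eq', Finset.prod_ite_eq']
    simp

/-- Weighted entropy of an IID string with additive weight function
`φ_n(x) = Σ_j ψ(x_j)`:
`h^w_{φ_n}(p_n) = n(n−1)·S(p)·E[ψ(X)] + n·H^w_ψ(p)`. -/
theorem weighted_entropy_iid_additive {A : Type*} [Fintype A]
    (p ψ : A → ℝ) (hp_nonneg : ∀ a, 0 ≤ p a) (hψ_nonneg : ∀ a, 0 ≤ ψ a)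
    (hp_prob : ∑ a, p a = 1) (n : ℕ) :
    -∑ x : Fin n → A,
        (∑ j, ψ (x j)) * (∏ j, p (x j)) * Real.log (∏ j, p (x j))
      = (n : ℝ) * ((n : ℝ) - 1) * (-∑ a, p a * Real.log (p a)) * (∑ a, ψ a * p a)
        + (n : ℝ) * (-∑ a, ψ a * p a * Real.log (p a)) := by
  classical
  set S : ℝ := ∑ a, p a * Real.log (p a) with hS
  set W : ℝ := ∑ a, ψ a * p a with hW
  set H : ℝ := ∑ a, ψ a * p a * Real.log (p a) with hH
  have key : ∀ x : Fin n → A,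
      (∑ j, ψ (x j)) * (∏ j, p (x j)) * Real.log (∏ j, p (x j))
        = ∑ j, ∑ k, ψ (x j) * Real.log (p (x k)) * ∏ i, p (x i) := by
    intro x
    have hlog : (∏ j, p (x j)) * Real.log (∏ j, p (x j))
        = ∑ k, Real.log (p (x k)) * ∏ i, p (x i) := by
      by_cases h : ∀ j : Fin n, p (x j) ≠ 0
      · rw [Real.log_prod (fun j _ => h j), Finset.mul_sum]
        exact Finset.sum_congr rfl fun k _ => mul_comm _ _
      · push_neg at h
        obtain ⟨j, hj⟩ := h
        have hprod : ∏ i, p (x i) = 0 := Finset.prod_eq_zero (Finset.mem_univ j) hj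
        simp [hprod]
    calc (∑ j, ψ (x j)) * (∏ j, p (x j)) * Real.log (∏ j, p (x j))
        = (∑ j, ψ (x j)) * ((∏ j, p (x j)) * Real.log (∏ j, p (x j))) := by ring
      _ = (∑ j, ψ (x j)) * ∑ k, Real.log (p (x k)) * ∏ i, p (x i) := by rw [hlog]
      _ = ∑ j, ∑ k, ψ (x j) * Real.log (p (x k)) * ∏ i, p (x i) := by
          rw [Finset.sum_mul_sum]
          apply Finset.sum_congr rfl; intro j _
          apply Finset.sum_congr rfl; intro k _
          ring
  simp only [key]
  rw [Finset.sum_comm]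
  have h3 : ∀ j : Fin n, (∑ x : Fin n → A, ∑ k, ψ (x j) * Real.log (p (x k)) * ∏ i, p (x i))
      = ∑ k, ∑ x : Fin n → A, ψ (x j) * Real.log (p (x k)) * ∏ i, p (x i) :=
    fun j => Finset.sum_comm
  simp only [h3]
  have h4 : ∀ j k : Fin n,
      (∑ x : Fin n → A, ψ (x j) * Real.log (p (x k)) * ∏ i, p (x i))
        = if j = k then H else W * S := fun j k => pair_sum p ψ hp_prob j k
  simp only [h4]
  have h5 : ∀ j : Fin n, (∑ k : Fin n, if j = k then H else W * S)
      = (n : ℝ) * (W * S) + (H - W * S) := by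
    intro j
    have hsplit : ∀ k : Fin n, (if j = k then H else W * S)
        = W * S + (if j = k then H - W * S else 0) := by
      intro k; by_cases h : j = k <;> simp [h]
    simp only [hsplit, Finset.sum_add_distrib, Finset.sum_ite_eq, Finset.mem_univ, if_true,
      Finset.sum_const, Finset.card_univ, Fintype.card_fin, nsmul_eq_mul]
  simp only [h5, Finset.sum_const, Finset.card_univ, Fintype.card_fin, nsmul_eq_mul]
  ring
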